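/- Let T be a tree with threshold-k resolving set S and let s, s' ∈ S be distinct. Define the attraction A(s,s') as the set of vertices x ∉ S that are directly measured by both s and s', by no other sensor, and are distinguished by {s,s'} from all other vertices not directly measured by sensors outside {s,s'}. Then for every type j with 1 ≤ j ≤ d(s,s') − 1, the number of vertices of type j in A(s,s') is at most k − max{j, d(s,s') − j} + 1; in particular |A(s,s')| ≤ Σ_{j=1}^{d(s,s')−1} (k − max{j, d(s,s') − j} + 1). -/

import Mathlib

open SimpleGraph Finset

variable {V : Type*}

/-- Truncated graph distance `d_k(x,y) = min(d(x,y), k+1)`. -/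
noncomputable def dk (G : SimpleGraph V) (k : ℕ) (x y : V) : ℕ := min (G.dist x y) (k + 1)

/-- `w` lies on a shortest path (in a tree: the unique path) between `x` and `y`. -/
def OnPath (G : SimpleGraph V) (x y w : V) : Prop :=
  G.dist x w + G.dist w y = G.dist x y

/-- `S` is a threshold-`k` resolving set for `G`. -/
def ThresholdResolving (G : SimpleGraph V) (k : ℕ) (S : Set V) : Prop :=
  (∀ x y : V, x ≠ y → ∃ s ∈ S, dk G k s x ≠ dk G k s y) ∧
  (∀ x : V, ∃ s ∈ S, G.dist s x ≤ k)

/-- A sensor `s` directly measures `x`: `d(s,x) ≤ k` and no other sensor lies on the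
path from `s` to `x`. -/
def DirectlyMeasures (G : SimpleGraph V) (k : ℕ) (S : Set V) (s x : V) : Prop :=
  G.dist s x ≤ k ∧ ∀ t ∈ S, t ≠ s → ¬ OnPath G s x t

/-- The threshold-`k` metric dimension of a finite graph. -/
noncomputable def Tmd (G : SimpleGraph V) [Fintype V] (k : ℕ) : ℕ :=
  sInf {m | ∃ S : Finset V, ThresholdResolving G k ↑S ∧ S.card = m}

/-- The path between the sensors `s₁ ≠ s₂` contains no other sensor. -/
def SensorPath (G : SimpleGraph V) (S : Set V) (s₁ s₂ : V) : Prop :=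
  s₁ ≠ s₂ ∧ s₁ ∈ S ∧ s₂ ∈ S ∧ ∀ t ∈ S, OnPath G s₁ s₂ t → t = s₁ ∨ t = s₂

/-- The edge `{a,b}` lies on the (tree-)path between `x` and `y`. -/
def EdgeOnPath (G : SimpleGraph V) (x y a b : V) : Prop :=
  G.Adj a b ∧ OnPath G x y a ∧ OnPath G x y b

/-- A leaf-path of length `ℓ` starting at `v`: an induced path `v = p 0, p 1, …, p ℓ`
with `deg v ≥ 3`, ending in a leaf, all internal vertices of degree 2. -/
def IsLeafPath (G : SimpleGraph V) [Fintype V] [DecidableRel G.Adj]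
    (v : V) (ℓ : ℕ) (p : Fin (ℓ + 1) → V) : Prop :=
  Function.Injective p ∧ p 0 = v ∧ 3 ≤ G.degree v ∧
  (∀ i : Fin ℓ, G.Adj (p i.castSucc) (p i.succ)) ∧
  G.degree (p (Fin.last ℓ)) = 1 ∧
  ∀ i : Fin (ℓ + 1), (i : ℕ) ≠ 0 → (i : ℕ) ≠ ℓ → G.degree (p i) = 2

/-- Upper complexity of a path of length `ℓ` (with `ℓ = q(3k+2)+r`). -/
def cbar (k ℓ : ℕ) : ℕ :=
  2 * (ℓ / (3 * k + 2)) + (if 1 ≤ ℓ % (3 * k + 2) then 1 else 0) +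
    (if 2 * k + 2 ≤ ℓ % (3 * k + 2) then 1 else 0)

/-- Lower complexity of a path of length `ℓ` (with `ℓ = q(3k+2)+r`). -/
def clow (k ℓ : ℕ) : ℕ :=
  2 * (ℓ / (3 * k + 2)) + (if k + 1 ≤ ℓ % (3 * k + 2) then 1 else 0) +
    (if 2 * k + 2 ≤ ℓ % (3 * k + 2) then 1 else 0)

/-- The type of a vertex `v` with respect to the sensor pair `(s, s')`. -/
noncomputable def typ (G : SimpleGraph V) (s s' v : V) : ℤ :=
  ((G.dist v s : ℤ) - (G.dist v s' : ℤ) + (G.dist s s' : ℤ)) / 2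

/-- The attraction of the pair of sensors `{s, s'}`. -/
def PairAttraction (G : SimpleGraph V) (k : ℕ) (S : Set V) (s s' : V) : Set V :=
  {x | x ∉ S ∧ DirectlyMeasures G k S s x ∧ DirectlyMeasures G k S s' x ∧
    (∀ t ∈ S, t ≠ s → t ≠ s' → ¬ DirectlyMeasures G k S t x) ∧
    ∀ y : V, y ≠ x → y ∉ S →
      (∀ t ∈ S, t ≠ s → t ≠ s' → ¬ DirectlyMeasures G k S t y) →
      dk G k s x ≠ dk G k s y ∨ dk G k s' x ≠ dk G k s' y}

/-- The subset of sensors `S' ⊆ S` minimally resolves the vertex `x`. -/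
def MinimallyResolves (G : SimpleGraph V) (k : ℕ) (S S' : Set V) (x : V) : Prop :=
  x ∉ S ∧ (∀ s ∈ S', G.dist s x ≤ k) ∧
  (∀ t ∈ S, t ∉ S' → ¬ DirectlyMeasures G k S t x) ∧
  (∀ y : V, y ≠ x → (∀ t ∈ S, t ∉ S' → ¬ DirectlyMeasures G k S t y) →
    ∃ s ∈ S', dk G k s x ≠ dk G k s y) ∧
  (∀ s ∈ S', DirectlyMeasures G k S s x)


private lemma exists_path_len {G : SimpleGraph V} (hc : G.Connected) (u v : V) :
    ∃ p : G.Walk u v, p.IsPath ∧ p.length = G.dist u v := by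
  classical
  obtain ⟨w, hw⟩ := hc.exists_walk_length_eq_dist u v
  refine ⟨w.bypass, w.bypass_isPath, le_antisymm ?_ (SimpleGraph.dist_le _)⟩
  exact hw ▸ w.length_bypass_le

private lemma tree_adj_dist_ne {G : SimpleGraph V} (hT : G.IsTree) (r : V) {u v : V}
    (h : G.Adj u v) : G.dist r u ≠ G.dist r v := by
  classical
  intro heq
  obtain ⟨p, hp, hpl⟩ := exists_path_len hT.isConnected u r
  obtain ⟨q, hq, hql⟩ := exists_path_len hT.isConnected r v
  have hu : u ∉ q.support := by
    intro hu
    have h1 := congr_arg SimpleGraph.Walk.length (q.take_spec hu)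
    rw [SimpleGraph.Walk.length_append] at h1
    have h2 : G.dist r u ≤ (q.takeUntil u hu).length := SimpleGraph.dist_le _
    have h3 : (q.dropUntil u hu).length = 0 := by omega
    exact h.ne (SimpleGraph.Walk.eq_of_length_eq_zero h3)
  obtain ⟨p₀, -, hun⟩ := hT.existsUnique_path u r
  have e1 : p = p₀ := hun p hp
  have e2 : SimpleGraph.Walk.cons h q.reverse = p₀ := hun _ (by
    refine SimpleGraph.Walk.IsPath.cons hq.reverse ?_
    rw [SimpleGraph.Walk.support_reverse, List.mem_reverse]
    exact hu)
  have : p.length = (SimpleGraph.Walk.cons h q.reverse).length := by rw [e1, e2]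
  rw [SimpleGraph.Walk.length_cons, SimpleGraph.Walk.length_reverse] at this
  have hcomm : G.dist u r = G.dist r u := SimpleGraph.dist_comm
  omega

private lemma tree_walk_parity {G : SimpleGraph V} (hT : G.IsTree) (r : V) :
    ∀ {u v : V} (w : G.Walk u v),
      (w.length : ZMod 2) = (G.dist r u : ZMod 2) + (G.dist r v : ZMod 2) := by
  have two0 : (2 : ZMod 2) = 0 := by decide
  have self0 : ∀ x : ZMod 2, x + x = 0 := by decide
  intro u v w
  induction w with
  | nil =>
    simp only [SimpleGraph.Walk.length_nil, Nat.cast_zero]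
    exact (self0 _).symm
  | @cons a b c h w ih =>
    have h1 : G.dist a b = 1 := SimpleGraph.dist_eq_one_iff_adj.mpr h
    have tri1 : G.dist r b ≤ G.dist r a + G.dist a b := hT.isConnected.dist_triangle
    have tri2 : G.dist r a ≤ G.dist r b + G.dist a b := by
      have t := hT.isConnected.dist_triangle (u := r) (v := b) (w := a)
      rwa [SimpleGraph.dist_comm (u := b) (v := a)] at t
    have hne := tree_adj_dist_ne hT r h
    have hcase : G.dist r b = G.dist r a + 1 ∨ G.dist r a = G.dist r b + 1 := by omega
    have key : (G.dist r a : ZMod 2) + (G.dist r b : ZMod 2) = 1 := by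
      rcases hcase with hc | hc <;> rw [hc] <;> push_cast
      · linear_combination (G.dist r a : ZMod 2) * two0
      · linear_combination (G.dist r b : ZMod 2) * two0
    rw [SimpleGraph.Walk.length_cons]
    push_cast
    rw [ih]
    linear_combination key + (1 - (G.dist r a : ZMod 2)) * two0

private lemma tree_parity {G : SimpleGraph V} (hT : G.IsTree) (x u v : V) :
    ∃ m : ℕ, G.dist u v + G.dist x u + G.dist x v = 2 * m := by
  have two0 : (2 : ZMod 2) = 0 := by decide
  obtain ⟨w, hw⟩ := hT.isConnected.exists_walk_length_eq_dist u v
  have h1 := tree_walk_parity hT x w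
  rw [hw] at h1
  have h2 : ((G.dist u v + G.dist x u + G.dist x v : ℕ) : ZMod 2) = 0 := by
    push_cast
    rw [h1]
    linear_combination ((G.dist x u : ZMod 2) + (G.dist x v : ZMod 2)) * two0
  rw [ZMod.natCast_eq_zero_iff] at h2
  obtain ⟨m, hm⟩ := h2
  exact ⟨m, hm⟩

private lemma ncard_le_sum_ncard {α β : Type*} [Fintype β] (t : Finset α) (f : α → Set β)
    (A : Set β) (h : A ⊆ ⋃ j ∈ t, f j) : A.ncard ≤ ∑ j ∈ t, (f j).ncard := by
  classical
  induction t using Finset.induction_on generalizing A with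
  | empty =>
    have hA : A = ∅ := Set.subset_empty_iff.mp (by simpa using h)
    rw [hA]
    simp
  | @insert a t' ha ih =>
    rw [Finset.sum_insert ha]
    have hsub : A ⊆ f a ∪ ⋃ j ∈ t', f j := by
      intro x hx
      have hx' := h hx
      simp only [Set.mem_iUnion, Finset.mem_insert, exists_prop] at hx'
      obtain ⟨j, hj, hxj⟩ := hx'
      rcases hj with rfl | hj
      · exact Or.inl hxj
      · exact Or.inr (Set.mem_iUnion₂.mpr ⟨j, hj, hxj⟩)
    calc A.ncard ≤ (f a ∪ ⋃ j ∈ t', f j).ncard := Set.ncard_le_ncard hsub (Set.toFinite _)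
      _ ≤ (f a).ncard + (⋃ j ∈ t', f j).ncard := Set.ncard_union_le _ _
      _ ≤ (f a).ncard + ∑ j ∈ t', (f j).ncard := Nat.add_le_add_left (ih _ subset_rfl) _

/-- the attraction of a pair of sensors has at most
`k − max{j, d(s,s')−j} + 1` vertices of each type `j`, and hence its size is at most
the corresponding sum. -/
theorem stmt14 (G : SimpleGraph V) [Fintype V] (hT : G.IsTree) (k : ℕ) (hk : 1 ≤ k)
    (S : Set V) (hS : ThresholdResolving G k S) (s s' : V) (hs : s ∈ S) (hs' : s' ∈ S)
    (hne : s ≠ s') :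
    (∀ j : ℕ, 1 ≤ j → j ≤ G.dist s s' - 1 →
      {x | x ∈ PairAttraction G k S s s' ∧ typ G s s' x = (j : ℤ)}.ncard ≤
        k - max j (G.dist s s' - j) + 1) ∧
    (PairAttraction G k S s s').ncard ≤
      ∑ j ∈ Finset.Icc 1 (G.dist s s' - 1), (k - max j (G.dist s s' - j) + 1) := by
  classical
  have hconn := hT.isConnected
  have hD1 : 1 ≤ G.dist s s' := hconn.pos_dist_of_ne hne
  have fact : ∀ x ∈ PairAttraction G k S s s', G.dist s x ≤ k ∧ G.dist s' x ≤ k ∧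
      1 ≤ typ G s s' x ∧ typ G s s' x ≤ (G.dist s s' : ℤ) - 1 ∧
      2 * typ G s s' x = (G.dist x s : ℤ) - (G.dist x s') + (G.dist s s') := by
    intro x hx
    obtain ⟨hxS, hdm1, hdm2, hno, hdist⟩ := hx
    have ha : G.dist s x ≤ k := hdm1.1
    have hb : G.dist s' x ≤ k := hdm2.1
    have c1 : G.dist x s = G.dist s x := SimpleGraph.dist_comm
    have c2 : G.dist x s' = G.dist s' x := SimpleGraph.dist_comm
    have c3 : G.dist s' s = G.dist s s' := SimpleGraph.dist_comm
    obtain ⟨m, hm⟩ := tree_parity hT x s s'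
    have tri1 : G.dist x s' ≤ G.dist x s + G.dist s s' := hconn.dist_triangle
    have tri2 : G.dist x s ≤ G.dist x s' + G.dist s' s := hconn.dist_triangle
    have tri3 : G.dist s s' ≤ G.dist s x + G.dist x s' := hconn.dist_triangle
    have strict1 : G.dist x s' ≠ G.dist x s + G.dist s s' := by
      intro hcon
      apply hdm2.2 s hs hne
      unfold OnPath
      omega
    have strict2 : G.dist x s ≠ G.dist x s' + G.dist s s' := by
      intro hcon
      apply hdm1.2 s' hs' hne.symm
      unfold OnPath
      omega
    have htyp : typ G s s' x =
        ((G.dist x s : ℤ) - (G.dist x s') + (G.dist s s')) / 2 := rfl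
    rw [htyp]
    refine ⟨ha, hb, by omega, by omega, by omega⟩
  have part1 : ∀ j : ℕ, 1 ≤ j → j ≤ G.dist s s' - 1 →
      {x | x ∈ PairAttraction G k S s s' ∧ typ G s s' x = (j : ℤ)}.ncard ≤
        k - max j (G.dist s s' - j) + 1 := by
    intro j hj1 hj2
    set Tj := {x | x ∈ PairAttraction G k S s s' ∧ typ G s s' x = (j : ℤ)} with hTj
    have hinj : Set.InjOn (fun x => G.dist x s) Tj := by
      intro x hx y hy hxy
      by_contra hxyne
      obtain ⟨hax, hbx, -, -, htx⟩ := fact x hx.1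
      obtain ⟨hay, hby, -, -, hty⟩ := fact y hy.1
      rw [hx.2] at htx
      rw [hy.2] at hty
      simp only at hxy
      have cx1 : G.dist x s = G.dist s x := SimpleGraph.dist_comm
      have cx2 : G.dist x s' = G.dist s' x := SimpleGraph.dist_comm
      have cy1 : G.dist y s = G.dist s y := SimpleGraph.dist_comm
      have cy2 : G.dist y s' = G.dist s' y := SimpleGraph.dist_comm
      have e1 : dk G k s x = dk G k s y := by unfold dk; omega
      have e2 : dk G k s' x = dk G k s' y := by unfold dk; omega
      have := hx.1.2.2.2.2 y (Ne.symm hxyne) hy.1.1 hy.1.2.2.2.1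
      tauto
    have himg : (fun x => G.dist x s) '' Tj ⊆
        ↑(Finset.Icc j (j + (k - max j (G.dist s s' - j)))) := by
      rintro _ ⟨x, hx, rfl⟩
      simp only [Finset.coe_Icc, Set.mem_Icc]
      obtain ⟨hax, hbx, -, -, htx⟩ := fact x hx.1
      rw [hx.2] at htx
      have cx1 : G.dist x s = G.dist s x := SimpleGraph.dist_comm
      have cx2 : G.dist x s' = G.dist s' x := SimpleGraph.dist_comm
      have tri3 : G.dist s s' ≤ G.dist s x + G.dist x s' := hconn.dist_triangle
      omega
    calc Tj.ncard = ((fun x => G.dist x s) '' Tj).ncard :=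
          (Set.ncard_image_of_injOn hinj).symm
      _ ≤ (↑(Finset.Icc j (j + (k - max j (G.dist s s' - j)))) : Set ℕ).ncard :=
          Set.ncard_le_ncard himg (Finset.finite_toSet _)
      _ = (Finset.Icc j (j + (k - max j (G.dist s s' - j)))).card :=
          Set.ncard_coe_finset _
      _ = k - max j (G.dist s s' - j) + 1 := by rw [Nat.card_Icc]; omega
  refine ⟨part1, ?_⟩
  have hsub : PairAttraction G k S s s' ⊆
      ⋃ j ∈ Finset.Icc 1 (G.dist s s' - 1),
        {x | x ∈ PairAttraction G k S s s' ∧ typ G s s' x = (j : ℤ)} := by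
    intro x hx
    obtain ⟨-, -, ht1, ht2, -⟩ := fact x hx
    refine Set.mem_iUnion₂.mpr ⟨(typ G s s' x).toNat, ?_, hx, ?_⟩
    · simp only [Finset.mem_Icc]
      omega
    · exact (Int.toNat_of_nonneg (by omega)).symm
  calc (PairAttraction G k S s s').ncard
      ≤ ∑ j ∈ Finset.Icc 1 (G.dist s s' - 1),
          {x | x ∈ PairAttraction G k S s s' ∧ typ G s s' x = (j : ℤ)}.ncard :=
        ncard_le_sum_ncard _ _ _ hsub
    _ ≤ ∑ j ∈ Finset.Icc 1 (G.dist s s' - 1), (k - max j (G.dist s s' - j) + 1) :=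
        Finset.sum_le_sum fun j hj =>
          part1 j (Finset.mem_Icc.mp hj).1 (Finset.mem_Icc.mp hj).2
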